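/- Fix s ≥ 0 and a : 𝒳 → ℝ with V_{s,a} > 0, and define φ_{s,a}(x,y) = ( i_{s,a}(x,y) − Σ_{y'} Ŵ(y'|x) i_{s,a}(x,y') ) / √V_{s,a}. Then for every r ≥ 0 and every conditional pmf P in the chi-squared ball B̃(Ŵ,r), one has Σ_{x,y} Q(x) P(y|x) i_{s,a}(x,y) ≥ I^ML_{s,a} − √(2 r V_{s,a}). Moreover, if in addition r ≤ 1 / ( 2 · max_{(x,y) : φ_{s,a}(x,y) > 0} φ_{s,a}(x,y)² ), then equality is attained by the conditional pmf W̃*_{s,a}(y|x) = Ŵ(y|x) ( 1 − √(2r) · φ_{s,a}(x,y) ), so that the infimum of Σ_{x,y} Q(x) P(y|x) i_{s,a}(x,y) over P ∈ B̃(Ŵ,r) equals I^ML_{s,a} − √(2 r V_{s,a}). -/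

import Mathlib

open Real Filter

variable {𝓧 𝓨 : Type*} [Fintype 𝓧] [Fintype 𝓨]

/-- Mismatched information density `i_{s,a}(x,y)`. -/
noncomputable def iDen (Q : 𝓧 → ℝ) (Wh : 𝓧 → 𝓨 → ℝ) (s : ℝ) (a : 𝓧 → ℝ) (x : 𝓧) (y : 𝓨) : ℝ :=
  Real.log ((Wh x y ^ s * Real.exp (a x)) / ∑ x' : 𝓧, Q x' * Wh x' y ^ s * Real.exp (a x'))

/-- `I^ML_{s,a}`. -/
noncomputable def IML (Q : 𝓧 → ℝ) (Wh : 𝓧 → 𝓨 → ℝ) (s : ℝ) (a : 𝓧 → ℝ) : ℝ :=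
  ∑ x : 𝓧, ∑ y : 𝓨, Q x * Wh x y * iDen Q Wh s a x y

/-- `V_{s,a}`. -/
noncomputable def Vsa (Q : 𝓧 → ℝ) (Wh : 𝓧 → 𝓨 → ℝ) (s : ℝ) (a : 𝓧 → ℝ) : ℝ :=
  ∑ x : 𝓧, Q x * ((∑ y : 𝓨, Wh x y * (iDen Q Wh s a x y) ^ 2)
    - (∑ y : 𝓨, Wh x y * iDen Q Wh s a x y) ^ 2)

/-- Conditional pmf on `𝓨` given `𝓧`. -/
def IsCondPMF (P : 𝓧 → 𝓨 → ℝ) : Prop :=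
  (∀ x y, 0 ≤ P x y) ∧ ∀ x, ∑ y : 𝓨, P x y = 1

/-- Chi-squared ball `B̃(Ŵ, r)`. -/
def chiBall (Q : 𝓧 → ℝ) (Wh : 𝓧 → 𝓨 → ℝ) (r : ℝ) : Set (𝓧 → 𝓨 → ℝ) :=
  {P | IsCondPMF P ∧
    (1 / 2) * ∑ x : 𝓧, ∑ y : 𝓨, Q x * (P x y - Wh x y) ^ 2 / Wh x y ≤ r}

/-- `φ_{s,a}(x,y)`. -/
noncomputable def phiSA (Q : 𝓧 → ℝ) (Wh : 𝓧 → 𝓨 → ℝ) (s : ℝ) (a : 𝓧 → ℝ) (x : 𝓧) (y : 𝓨) : ℝ :=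
  (iDen Q Wh s a x y - ∑ y' : 𝓨, Wh x y' * iDen Q Wh s a x y') / Real.sqrt (Vsa Q Wh s a)

/-- Worst-case channel `W̃*_{s,a}` in the chi-squared ball of radius `r`. -/
noncomputable def Wstar (Q : 𝓧 → ℝ) (Wh : 𝓧 → 𝓨 → ℝ) (s : ℝ) (a : 𝓧 → ℝ) (r : ℝ) :
    𝓧 → 𝓨 → ℝ :=
  fun x y => Wh x y * (1 - Real.sqrt (2 * r) * phiSA Q Wh s a x y)

/-- Worst-case value of `Σ Q P i_{s,a}` over the chi-squared ball: lower bound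
valid for every `P` in the ball, attained by `W̃*_{s,a}` for small enough radius. -/
theorem stmt2 [Nonempty 𝓧] [Nonempty 𝓨]
    (Q : 𝓧 → ℝ) (hQpos : ∀ x, 0 < Q x) (hQle : ∀ x, Q x ≤ 1) (hQsum : ∑ x : 𝓧, Q x = 1)
    (Wh : 𝓧 → 𝓨 → ℝ) (hWpos : ∀ x y, 0 < Wh x y) (hWsum : ∀ x, ∑ y : 𝓨, Wh x y = 1)
    (s : ℝ) (hs : 0 ≤ s) (a : 𝓧 → ℝ) (hV : 0 < Vsa Q Wh s a) :
    (∀ r : ℝ, 0 ≤ r → ∀ P ∈ chiBall Q Wh r,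
      IML Q Wh s a - Real.sqrt (2 * r * Vsa Q Wh s a)
        ≤ ∑ x : 𝓧, ∑ y : 𝓨, Q x * P x y * iDen Q Wh s a x y) ∧
    (∀ r : ℝ, 0 ≤ r →
      r ≤ 1 / (2 * sSup {v | ∃ x y, 0 < phiSA Q Wh s a x y ∧ v = (phiSA Q Wh s a x y) ^ 2}) →
      Wstar Q Wh s a r ∈ chiBall Q Wh r ∧
      (∑ x : 𝓧, ∑ y : 𝓨, Q x * Wstar Q Wh s a r x y * iDen Q Wh s a x y)
        = IML Q Wh s a - Real.sqrt (2 * r * Vsa Q Wh s a) ∧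
      sInf {v | ∃ P ∈ chiBall Q Wh r,
          v = ∑ x : 𝓧, ∑ y : 𝓨, Q x * P x y * iDen Q Wh s a x y}
        = IML Q Wh s a - Real.sqrt (2 * r * Vsa Q Wh s a)) := by
  classical
  have hQ0 : ∀ x, (0:ℝ) ≤ Q x := fun x => (hQpos x).le
  set ii := iDen Q Wh s a with hIdef
  set V := Vsa Q Wh s a with hVdef
  have hV0 : (0:ℝ) ≤ V := hV.le
  set m : 𝓧 → ℝ := fun x => ∑ y : 𝓨, Wh x y * ii x y with hmdef
  set φ := phiSA Q Wh s a with hphidef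
  have hφ : ∀ x y, φ x y = (ii x y - m x) / Real.sqrt V := fun x y => rfl
  have hmx : ∀ x, ∑ y : 𝓨, Wh x y * ii x y = m x := fun _ => rfl
  -- centered second moment identity
  have hVsum : ∑ x : 𝓧, ∑ y : 𝓨, Q x * Wh x y * (ii x y - m x) ^ 2 = V := by
    rw [hVdef, Vsa]
    refine Finset.sum_congr rfl fun x _ => ?_
    have h1 : ∀ y : 𝓨, Q x * Wh x y * (ii x y - m x) ^ 2
        = Q x * (Wh x y * ii x y ^ 2) - Q x * (2 * m x) * (Wh x y * ii x y)
          + Q x * m x ^ 2 * Wh x y := fun y => by ring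
    rw [Finset.sum_congr rfl fun y _ => h1 y, Finset.sum_add_distrib,
      Finset.sum_sub_distrib, ← Finset.mul_sum, ← Finset.mul_sum, ← Finset.mul_sum,
      hWsum x, hmx x, ← hIdef]
    ring
  -- Part 1: the lower bound
  have part1 : ∀ r : ℝ, 0 ≤ r → ∀ P ∈ chiBall Q Wh r,
      IML Q Wh s a - Real.sqrt (2 * r * V)
        ≤ ∑ x : 𝓧, ∑ y : 𝓨, Q x * P x y * ii x y := by
    intro r hr P hP
    obtain ⟨⟨hPnn, hPsum⟩, hPball⟩ := hP
    set u : 𝓧 × 𝓨 → ℝ := fun p =>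
      Real.sqrt (Q p.1 / Wh p.1 p.2) * (P p.1 p.2 - Wh p.1 p.2) with hudef
    set v : 𝓧 × 𝓨 → ℝ := fun p =>
      Real.sqrt (Q p.1 * Wh p.1 p.2) * (ii p.1 p.2 - m p.1) with hvdef
    have huv : ∀ p : 𝓧 × 𝓨, u p * v p
        = Q p.1 * (P p.1 p.2 - Wh p.1 p.2) * (ii p.1 p.2 - m p.1) := by
      intro p
      have hW := hWpos p.1 p.2
      have hss : Real.sqrt (Q p.1 / Wh p.1 p.2) * Real.sqrt (Q p.1 * Wh p.1 p.2) = Q p.1 := by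
        rw [← Real.sqrt_mul (div_nonneg (hQ0 _) hW.le),
          show Q p.1 / Wh p.1 p.2 * (Q p.1 * Wh p.1 p.2) = Q p.1 ^ 2 by
            field_simp]
        exact Real.sqrt_sq (hQ0 _)
      calc u p * v p = (Real.sqrt (Q p.1 / Wh p.1 p.2) * Real.sqrt (Q p.1 * Wh p.1 p.2))
            * ((P p.1 p.2 - Wh p.1 p.2) * (ii p.1 p.2 - m p.1)) := by rw [hudef, hvdef]; ring
        _ = _ := by rw [hss]; ring
    have hu2 : ∀ p : 𝓧 × 𝓨, u p ^ 2
        = Q p.1 * (P p.1 p.2 - Wh p.1 p.2) ^ 2 / Wh p.1 p.2 := by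
      intro p
      have hW := hWpos p.1 p.2
      rw [hudef, mul_pow, Real.sq_sqrt (div_nonneg (hQ0 _) hW.le)]
      field_simp
    have hv2 : ∀ p : 𝓧 × 𝓨, v p ^ 2
        = Q p.1 * Wh p.1 p.2 * (ii p.1 p.2 - m p.1) ^ 2 := by
      intro p
      rw [hvdef, mul_pow, Real.sq_sqrt (mul_nonneg (hQ0 _) (hWpos _ _).le)]
    have hsumu2 : ∑ p : 𝓧 × 𝓨, u p ^ 2 ≤ 2 * r := by
      have : ∑ p : 𝓧 × 𝓨, u p ^ 2
          = ∑ x : 𝓧, ∑ y : 𝓨, Q x * (P x y - Wh x y) ^ 2 / Wh x y := by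
        rw [Fintype.sum_prod_type]
        exact Finset.sum_congr rfl fun x _ => Finset.sum_congr rfl fun y _ => hu2 (x, y)
      rw [this]; linarith
    have hsumv2 : ∑ p : 𝓧 × 𝓨, v p ^ 2 = V := by
      rw [← hVsum, Fintype.sum_prod_type]
      exact Finset.sum_congr rfl fun x _ => Finset.sum_congr rfl fun y _ => hv2 (x, y)
    have hCS : (∑ p : 𝓧 × 𝓨, u p * v p) ^ 2 ≤ 2 * r * V := by
      refine le_trans (Finset.sum_mul_sq_le_sq_mul_sq Finset.univ u v) ?_
      have h1 : (0:ℝ) ≤ ∑ p : 𝓧 × 𝓨, u p ^ 2 :=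
        Finset.sum_nonneg fun p _ => sq_nonneg _
      calc (∑ p : 𝓧 × 𝓨, u p ^ 2) * ∑ p : 𝓧 × 𝓨, v p ^ 2
          = (∑ p : 𝓧 × 𝓨, u p ^ 2) * V := by rw [hsumv2]
        _ ≤ 2 * r * V := mul_le_mul_of_nonneg_right hsumu2 hV0
    have hD : ∑ p : 𝓧 × 𝓨, u p * v p
        = (∑ x : 𝓧, ∑ y : 𝓨, Q x * P x y * ii x y) - IML Q Wh s a := by
      rw [Fintype.sum_prod_type, IML, ← Finset.sum_sub_distrib]
      refine Finset.sum_congr rfl fun x _ => ?_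
      have h1 : ∀ y : 𝓨, u (x, y) * v (x, y)
          = Q x * P x y * ii x y - Q x * Wh x y * ii x y
            - Q x * m x * P x y + Q x * m x * Wh x y := fun y => by
        rw [huv (x, y)]; ring
      rw [Finset.sum_congr rfl fun y _ => h1 y, Finset.sum_add_distrib,
        Finset.sum_sub_distrib, Finset.sum_sub_distrib, ← Finset.mul_sum, ← Finset.mul_sum,
        hPsum x, hWsum x]
      have : ∑ y : 𝓨, Q x * Wh x y * iDen Q Wh s a x y
          = ∑ y : 𝓨, Q x * Wh x y * ii x y := rfl
      rw [this]; ring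
    have habs : |∑ p : 𝓧 × 𝓨, u p * v p| ≤ Real.sqrt (2 * r * V) := by
      rw [← Real.sqrt_sq_eq_abs]
      exact Real.sqrt_le_sqrt hCS
    have := neg_abs_le (∑ p : 𝓧 × 𝓨, u p * v p)
    rw [hD] at habs this
    have h2 := (abs_le.mp habs).1
    linarith
  refine ⟨part1, ?_⟩
  intro r hr hrle
  -- facts about φ
  have hsV : (0:ℝ) < Real.sqrt V := Real.sqrt_pos.mpr hV
  have hsV2 : Real.sqrt V ^ 2 = V := Real.sq_sqrt hV0
  have hcent : ∀ x, ∑ y : 𝓨, Wh x y * (ii x y - m x) = 0 := by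
    intro x
    have h1 : ∀ y : 𝓨, Wh x y * (ii x y - m x) = Wh x y * ii x y - m x * Wh x y :=
      fun y => by ring
    rw [Finset.sum_congr rfl fun y _ => h1 y, Finset.sum_sub_distrib, ← Finset.mul_sum,
      hWsum x, hmx x]
    ring
  have hφW0 : ∀ x, ∑ y : 𝓨, Wh x y * φ x y = 0 := by
    intro x
    have h1 : ∀ y : 𝓨, Wh x y * φ x y = Wh x y * (ii x y - m x) / Real.sqrt V :=
      fun y => by rw [hφ]; ring
    rw [Finset.sum_congr rfl fun y _ => h1 y, ← Finset.sum_div, hcent x, zero_div]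
  have hφ2sum : ∑ x : 𝓧, ∑ y : 𝓨, Q x * Wh x y * φ x y ^ 2 = 1 := by
    have h1 : ∀ x, ∀ y : 𝓨, Q x * Wh x y * φ x y ^ 2
        = Q x * Wh x y * (ii x y - m x) ^ 2 / V := by
      intro x y
      rw [hφ, div_pow, hsV2]; ring
    calc ∑ x : 𝓧, ∑ y : 𝓨, Q x * Wh x y * φ x y ^ 2
        = ∑ x : 𝓧, ∑ y : 𝓨, Q x * Wh x y * (ii x y - m x) ^ 2 / V := by
          exact Finset.sum_congr rfl fun x _ => Finset.sum_congr rfl fun y _ => h1 x y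
      _ = ∑ x : 𝓧, (∑ y : 𝓨, Q x * Wh x y * (ii x y - m x) ^ 2) / V :=
          Finset.sum_congr rfl fun x _ => (Finset.sum_div ..).symm
      _ = (∑ x : 𝓧, ∑ y : 𝓨, Q x * Wh x y * (ii x y - m x) ^ 2) / V := by
          rw [← Finset.sum_div]
      _ = 1 := by rw [hVsum]; field_simp
  have hφI : ∑ x : 𝓧, ∑ y : 𝓨, Q x * Wh x y * φ x y * ii x y = Real.sqrt V := by
    have h1 : ∀ x, ∑ y : 𝓨, Q x * Wh x y * φ x y * ii x y
        = (∑ y : 𝓨, Q x * Wh x y * (ii x y - m x) ^ 2 / Real.sqrt V)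
          + Q x * m x * ∑ y : 𝓨, Wh x y * φ x y := by
      intro x
      rw [Finset.mul_sum, ← Finset.sum_add_distrib]
      refine Finset.sum_congr rfl fun y _ => ?_
      rw [hφ]
      have : Real.sqrt V ≠ 0 := ne_of_gt hsV
      field_simp
      ring
    calc ∑ x : 𝓧, ∑ y : 𝓨, Q x * Wh x y * φ x y * ii x y
        = ∑ x : 𝓧, ((∑ y : 𝓨, Q x * Wh x y * (ii x y - m x) ^ 2 / Real.sqrt V)
            + Q x * m x * ∑ y : 𝓨, Wh x y * φ x y) :=
          Finset.sum_congr rfl fun x _ => h1 x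
      _ = ∑ x : 𝓧, ∑ y : 𝓨, Q x * Wh x y * (ii x y - m x) ^ 2 / Real.sqrt V := by
          refine Finset.sum_congr rfl fun x _ => ?_
          rw [hφW0 x]; ring
      _ = ∑ x : 𝓧, (∑ y : 𝓨, Q x * Wh x y * (ii x y - m x) ^ 2) / Real.sqrt V :=
          Finset.sum_congr rfl fun x _ => (Finset.sum_div ..).symm
      _ = (∑ x : 𝓧, ∑ y : 𝓨, Q x * Wh x y * (ii x y - m x) ^ 2) / Real.sqrt V := by
          rw [← Finset.sum_div]
      _ = Real.sqrt V := by
          rw [hVsum]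
          rw [← hsV2]; field_simp
          rw [Real.sqrt_sq hsV.le]
  -- bound √(2r) φ ≤ 1
  have h2r0 : (0:ℝ) ≤ 2 * r := by linarith
  have hc2 : Real.sqrt (2 * r) ^ 2 = 2 * r := Real.sq_sqrt h2r0
  have hbound : ∀ x y, Real.sqrt (2 * r) * φ x y ≤ 1 := by
    intro x y
    by_cases hpos : 0 < φ x y
    · set S : Set ℝ := {v | ∃ x y, 0 < phiSA Q Wh s a x y ∧ v = (phiSA Q Wh s a x y) ^ 2}
        with hSdef
      have hSfin : S.Finite := by
        refine Set.Finite.subset (Set.finite_range fun p : 𝓧 × 𝓨 => φ p.1 p.2 ^ 2) ?_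
        rintro w ⟨x', y', _, rfl⟩
        exact ⟨(x', y'), rfl⟩
      have hmemS : φ x y ^ 2 ∈ S := ⟨x, y, hpos, rfl⟩
      have hleM : φ x y ^ 2 ≤ sSup S := le_csSup (hSfin.bddAbove) hmemS
      have hM0 : 0 < sSup S := lt_of_lt_of_le (pow_pos hpos 2) hleM
      have h2rφ : 2 * r * φ x y ^ 2 ≤ 1 := by
        have hr' : r * (2 * sSup S) ≤ 1 := by
          have := hrle
          rw [le_div_iff₀ (by positivity)] at this
          linarith
        nlinarith [sq_nonneg (φ x y)]
      have : Real.sqrt (2 * r) * φ x y = Real.sqrt (2 * r * φ x y ^ 2) := by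
        rw [Real.sqrt_mul h2r0, Real.sqrt_sq hpos.le]
      rw [this]
      calc Real.sqrt (2 * r * φ x y ^ 2) ≤ Real.sqrt 1 := Real.sqrt_le_sqrt h2rφ
        _ = 1 := Real.sqrt_one
    · push_neg at hpos
      have : Real.sqrt (2 * r) * φ x y ≤ 0 :=
        mul_nonpos_of_nonneg_of_nonpos (Real.sqrt_nonneg _) hpos
      linarith
  have hWstar : ∀ x y, Wstar Q Wh s a r x y
      = Wh x y * (1 - Real.sqrt (2 * r) * φ x y) := fun x y => rfl
  -- membership in the ball
  have hmemball : Wstar Q Wh s a r ∈ chiBall Q Wh r := by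
    refine ⟨⟨fun x y => ?_, fun x => ?_⟩, ?_⟩
    · rw [hWstar]
      exact mul_nonneg (hWpos x y).le (by linarith [hbound x y])
    · have h1 : ∀ y : 𝓨, Wstar Q Wh s a r x y
          = Wh x y - Real.sqrt (2 * r) * (Wh x y * φ x y) := fun y => by
        rw [hWstar]; ring
      rw [Finset.sum_congr rfl fun y _ => h1 y, Finset.sum_sub_distrib, ← Finset.mul_sum,
        hWsum x, hφW0 x]
      ring
    · have h1 : ∀ x y, Q x * (Wstar Q Wh s a r x y - Wh x y) ^ 2 / Wh x y
          = 2 * r * (Q x * Wh x y * φ x y ^ 2) := by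
        intro x y
        have hW := hWpos x y
        rw [hWstar]
        rw [show Wh x y * (1 - Real.sqrt (2 * r) * φ x y) - Wh x y
            = -(Wh x y * (Real.sqrt (2 * r) * φ x y)) by ring]
        rw [neg_sq, mul_pow, mul_pow, hc2]
        field_simp
      have h2 : ∑ x : 𝓧, ∑ y : 𝓨, Q x * (Wstar Q Wh s a r x y - Wh x y) ^ 2 / Wh x y
          = 2 * r * ∑ x : 𝓧, ∑ y : 𝓨, Q x * Wh x y * φ x y ^ 2 := by
        rw [Finset.mul_sum]
        refine Finset.sum_congr rfl fun x _ => ?_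
        rw [Finset.mul_sum]
        exact Finset.sum_congr rfl fun y _ => h1 x y
      rw [h2, hφ2sum]
      linarith
  -- value at Wstar
  have hvalue : ∑ x : 𝓧, ∑ y : 𝓨, Q x * Wstar Q Wh s a r x y * ii x y
      = IML Q Wh s a - Real.sqrt (2 * r * V) := by
    have h1 : ∀ x, ∀ y : 𝓨, Q x * Wstar Q Wh s a r x y * ii x y
        = Q x * Wh x y * ii x y - Real.sqrt (2 * r) * (Q x * Wh x y * φ x y * ii x y) := by
      intro x y; rw [hWstar]; ring
    calc ∑ x : 𝓧, ∑ y : 𝓨, Q x * Wstar Q Wh s a r x y * ii x y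
        = ∑ x : 𝓧, ((∑ y : 𝓨, Q x * Wh x y * ii x y)
            - Real.sqrt (2 * r) * ∑ y : 𝓨, Q x * Wh x y * φ x y * ii x y) := by
          refine Finset.sum_congr rfl fun x _ => ?_
          rw [Finset.sum_congr rfl fun y _ => h1 x y, Finset.sum_sub_distrib, ← Finset.mul_sum]
      _ = (∑ x : 𝓧, ∑ y : 𝓨, Q x * Wh x y * ii x y)
            - Real.sqrt (2 * r) * ∑ x : 𝓧, ∑ y : 𝓨, Q x * Wh x y * φ x y * ii x y := by
          rw [Finset.sum_sub_distrib, ← Finset.mul_sum]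
      _ = IML Q Wh s a - Real.sqrt (2 * r * V) := by
          rw [hφI, IML, Real.sqrt_mul h2r0]
  refine ⟨hmemball, hvalue, ?_⟩
  -- the infimum
  set T : Set ℝ := {v | ∃ P ∈ chiBall Q Wh r,
    v = ∑ x : 𝓧, ∑ y : 𝓨, Q x * P x y * iDen Q Wh s a x y} with hTdef
  have hmemT : IML Q Wh s a - Real.sqrt (2 * r * V) ∈ T :=
    ⟨Wstar Q Wh s a r, hmemball, hvalue.symm⟩
  have hlb : ∀ w ∈ T, IML Q Wh s a - Real.sqrt (2 * r * V) ≤ w := by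
    rintro w ⟨P, hP, rfl⟩
    exact part1 r hr P hP
  exact le_antisymm (csInf_le ⟨_, hlb⟩ hmemT) (le_csInf ⟨_, hmemT⟩ hlb)
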